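/- Under hypotheses (H1)–(H4), the following inequalities hold: b − a ≤ n, and −n < a < −1/3 < 1/3 < b < n. -/

import Mathlib

open MeasureTheory Set Pointwise

lemma mass_right (f : ℝ → ℝ) (hf_int : Integrable f) (hxf_int : Integrable (fun x => x * f x))
    (hf0 : ∀ x, 0 ≤ f x) (hf1 : ∀ x, f x ≤ 1) (b : ℝ) (hsupp : ∀ x, b < x → f x = 0)
    (hmass : ∫ x, f x = 1) (hcent : ∫ x, x * f x = 0) : 1/2 ≤ b := by
  classical
  set g : ℝ → ℝ := (Icc (b-1) b).indicator (fun _ => 1) with hg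
  have hg_int : Integrable g := (integrable_indicator_iff measurableSet_Icc).2
    ((integrableOn_const_iff).2 (Or.inr (by simp [Real.volume_Icc])))
  have hxg_eq : (fun x => x * g x) = (Icc (b-1) b).indicator (fun x => x) := by
    funext x
    by_cases hx : x ∈ Icc (b-1) b <;> simp [hg, indicator, hx]
  have hxg_int : Integrable (fun x => x * g x) := by
    rw [hxg_eq]
    exact (integrable_indicator_iff measurableSet_Icc).2
      (ContinuousOn.integrableOn_compact isCompact_Icc continuousOn_id)
  have hgmass : ∫ x, g x = 1 := by
    rw [hg, integral_indicator measurableSet_Icc]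
    simp [Real.volume_Icc]
  have hgcent : ∫ x, x * g x = b - 1/2 := by
    rw [hxg_eq, integral_indicator measurableSet_Icc, integral_Icc_eq_integral_Ioc,
      ← intervalIntegral.integral_of_le (by linarith : b - 1 ≤ b), integral_id]
    ring
  have hpt : ∀ x, 0 ≤ ((b-1) - x) * (f x - g x) := by
    intro x
    rcases le_or_gt x (b-1) with h1 | h1
    · rcases eq_or_lt_of_le h1 with rfl | h1'
      · simp
      · have hgx : g x = 0 := by simp [hg, indicator]; intro h; linarith
        have := hf0 x
        nlinarith
    · rcases le_or_gt x b with h2 | h2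
      · have hgx : g x = 1 := by simp [hg, indicator]; constructor <;> linarith
        have := hf1 x
        nlinarith
      · have hgx : g x = 0 := by simp [hg, indicator]; intro h; linarith
        rw [hsupp x h2, hgx]; simp
  have h0 : 0 ≤ ∫ x, ((b-1) - x) * (f x - g x) := integral_nonneg hpt
  have hval : ∫ x, ((b-1) - x) * (f x - g x) = b - 1/2 := by
    have hrw : (fun x => ((b-1) - x) * (f x - g x)) =
        (fun x => ((b-1) * f x - (b-1) * g x - x * f x + x * g x)) := by funext x; ring
    have e1 : ∫ x, ((b-1) * f x - (b-1) * g x - x * f x + x * g x)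
        = (∫ x, ((b-1) * f x - (b-1) * g x - x * f x)) + ∫ x, x * g x :=
      integral_add (((hf_int.const_mul _).sub (hg_int.const_mul _)).sub hxf_int) hxg_int
    have e2 : ∫ x, ((b-1) * f x - (b-1) * g x - x * f x)
        = (∫ x, ((b-1) * f x - (b-1) * g x)) - ∫ x, x * f x :=
      integral_sub ((hf_int.const_mul _).sub (hg_int.const_mul _)) hxf_int
    have e3 : ∫ x, ((b-1) * f x - (b-1) * g x)
        = (∫ x, (b-1) * f x) - ∫ x, (b-1) * g x :=
      integral_sub (hf_int.const_mul _) (hg_int.const_mul _)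
    rw [hrw, e1, e2, e3, integral_const_mul, integral_const_mul, hmass, hgmass, hcent, hgcent]
    ring
  rw [hval] at h0
  linarith

lemma sect_lower (m : ℕ) (K : Set (ℝ × EuclideanSpace ℝ (Fin m))) (hK : Convex ℝ K)
    {x₀ c : ℝ} {y_c : EuclideanSpace ℝ (Fin m)} (hyc : (c, y_c) ∈ K) {t : ℝ}
    (ht0 : 0 ≤ t) (ht1 : t ≤ 1) :
    ENNReal.ofReal ((1-t)^m) * volume {y : EuclideanSpace ℝ (Fin m) | (x₀, y) ∈ K}
      ≤ volume {y : EuclideanSpace ℝ (Fin m) | ((1-t)*x₀ + t*c, y) ∈ K} := by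
  set S := {y : EuclideanSpace ℝ (Fin m) | (x₀, y) ∈ K}
  have hsub : (t • y_c) +ᵥ ((1-t) • S)
      ⊆ {y : EuclideanSpace ℝ (Fin m) | ((1-t)*x₀ + t*c, y) ∈ K} := by
    rintro _ ⟨_, ⟨y, hy, rfl⟩, rfl⟩
    have := hK hy hyc (by linarith : (0:ℝ) ≤ 1 - t) ht0 (by ring)
    simpa [Prod.smul_mk, Prod.mk_add_mk, add_comm] using this
  calc ENNReal.ofReal ((1-t)^m) * volume S
      = volume ((t • y_c) +ᵥ ((1-t) • S)) := by
        rw [measure_vadd, Measure.addHaar_smul, finrank_euclideanSpace_fin,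
          abs_of_nonneg (pow_nonneg (by linarith) m)]
    _ ≤ _ := measure_mono hsub

lemma cone_int_right (f : ℝ → ℝ) (hf_int : Integrable f) (hf0 : ∀ x, 0 ≤ f x) (m : ℕ) {u v : ℝ}
    (huv : u ≤ v) (hbound : ∀ x ∈ Ioc u v, ((v - x)/(v-u))^m ≤ f x) :
    (v - u)/(m+1) ≤ ∫ x in Icc u v, f x := by
  rcases eq_or_lt_of_le huv with rfl | hlt
  · simpa using setIntegral_nonneg measurableSet_Icc (fun x _ => hf0 x)
  have hd : (0:ℝ) < v - u := by linarith
  have hcont : Continuous (fun x : ℝ => ((v - x)/(v-u))^m) := by continuity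
  have key : ∫ x in Ioc u v, ((v - x)/(v-u))^m ∂volume = (v - u)/(m+1) := by
    rw [← intervalIntegral.integral_of_le huv]
    have : ∀ x : ℝ, ((v - x)/(v-u))^m = (v-u)⁻¹^m * (v - x)^m := fun x => by
      rw [div_eq_mul_inv, mul_pow, mul_comm]
    simp_rw [this]
    rw [intervalIntegral.integral_const_mul,
      intervalIntegral.integral_comp_sub_left (fun x => x^m) v, integral_pow]
    have hvu : v - u ≠ 0 := ne_of_gt hd
    field_simp
    rw [sub_self, mul_zero, zero_pow (Nat.succ_ne_zero m), sub_zero, pow_succ, ← mul_assoc,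
      ← mul_pow, one_div_mul_cancel hvu, one_pow, one_mul]
  rw [integral_Icc_eq_integral_Ioc, ← key]
  exact setIntegral_mono_on (hcont.integrableOn_Icc.mono_set Ioc_subset_Icc_self)
    (hf_int.integrableOn) measurableSet_Ioc hbound

lemma cone_int_left (f : ℝ → ℝ) (hf_int : Integrable f) (hf0 : ∀ x, 0 ≤ f x) (m : ℕ) {u v : ℝ}
    (huv : u ≤ v) (hbound : ∀ x ∈ Ico u v, ((x - u)/(v-u))^m ≤ f x) :
    (v - u)/(m+1) ≤ ∫ x in Icc u v, f x := by
  rcases eq_or_lt_of_le huv with rfl | hlt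
  · simpa using setIntegral_nonneg measurableSet_Icc (fun x _ => hf0 x)
  have hd : (0:ℝ) < v - u := by linarith
  have hcont : Continuous (fun x : ℝ => ((x - u)/(v-u))^m) := by continuity
  have key : ∫ x in Ico u v, ((x - u)/(v-u))^m ∂volume = (v - u)/(m+1) := by
    rw [integral_Ico_eq_integral_Ioo, ← integral_Ioc_eq_integral_Ioo,
      ← intervalIntegral.integral_of_le huv]
    have : ∀ x : ℝ, ((x - u)/(v-u))^m = (v-u)⁻¹^m * (x - u)^m := fun x => by
      rw [div_eq_mul_inv, mul_pow, mul_comm]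
    simp_rw [this]
    rw [intervalIntegral.integral_const_mul,
      intervalIntegral.integral_comp_sub_right (fun x => x^m) u, integral_pow]
    have hvu : v - u ≠ 0 := ne_of_gt hd
    field_simp
    rw [sub_self, mul_zero, zero_pow (Nat.succ_ne_zero m), sub_zero, pow_succ, ← mul_assoc,
      ← mul_pow, one_div_mul_cancel hvu, one_pow, one_mul]
  rw [integral_Icc_eq_integral_Ico, ← key]
  exact setIntegral_mono_on (hcont.integrableOn_Icc.mono_set Ico_subset_Icc_self)
    (hf_int.integrableOn) measurableSet_Ico hbound

theorem bounds_on_a_b (n : ℕ) (hn : 2 ≤ n)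
    (K : Set (ℝ × EuclideanSpace ℝ (Fin (n - 1))))
    (hKcomp : IsCompact K) (hKconv : Convex ℝ K)
    -- (H1): the centroid of K is the origin
    (hH1 : (∫ p in K, p) = 0)
    -- (H3): max_x |K_x| = 1
    (hH3le : ∀ x : ℝ, volume {y : EuclideanSpace ℝ (Fin (n - 1)) | (x, y) ∈ K} ≤ 1)
    (hH3eq : ∃ x : ℝ, volume {y : EuclideanSpace ℝ (Fin (n - 1)) | (x, y) ∈ K} = 1)
    -- (H4): |K| = 1
    (hH4 : volume K = 1)
    (a b : ℝ)
    (ha : IsLeast (Prod.fst '' K) a) (hb : IsGreatest (Prod.fst '' K) b) :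
    b - a ≤ n ∧ -(n:ℝ) < a ∧ a < -(1/3) ∧ (1/3:ℝ) < b ∧ b < n := by
  classical
  have hKm : MeasurableSet K := hKcomp.measurableSet
  obtain ⟨pb, hpb, hpb1⟩ := hb.1
  obtain ⟨pa, hpa, hpa1⟩ := ha.1
  have hyb : (b, pb.2) ∈ K := by rwa [← hpb1, Prod.mk.eta]
  have hya : (a, pa.2) ∈ K := by rwa [← hpa1, Prod.mk.eta]
  have hab : a ≤ b := hb.2 ⟨pa, hpa, hpa1⟩
  -- the section measure function
  set fe : ℝ → ENNReal := fun x => volume {y : EuclideanSpace ℝ (Fin (n - 1)) | (x, y) ∈ K} with hfe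
  have hfe_meas : Measurable fe := measurable_measure_prodMk_left hKm
  have hfe_le : ∀ x, fe x ≤ 1 := hH3le
  have hfe_ne_top : ∀ x, fe x ≠ ⊤ := fun x => ne_top_of_le_ne_top (by norm_num) (hfe_le x)
  have hlint : ∫⁻ x, fe x = 1 := by
    rw [← hH4, Measure.volume_eq_prod, Measure.prod_apply hKm]
    rfl
  set f : ℝ → ℝ := fun x => (fe x).toReal with hf
  have hf0 : ∀ x, 0 ≤ f x := fun x => ENNReal.toReal_nonneg
  have hf1 : ∀ x, f x ≤ 1 := by
    intro x
    have := ENNReal.toReal_mono (by norm_num) (hfe_le x)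
    simpa using this
  have hsupp : ∀ x, x ∉ Icc a b → fe x = 0 := by
    intro x hx
    by_contra h
    obtain ⟨y, hy⟩ := nonempty_of_measure_ne_zero h
    exact hx ⟨ha.2 ⟨(x, y), hy, rfl⟩, hb.2 ⟨(x, y), hy, rfl⟩⟩
  have hfsupp : ∀ x, x ∉ Icc a b → f x = 0 := by
    intro x hx; rw [hf]; simp [hsupp x hx]
  have hintf : ∫ x, f x = 1 := by
    rw [hf]
    rw [integral_toReal hfe_meas.aemeasurable
      (Filter.Eventually.of_forall fun x => lt_of_le_of_lt (hfe_le x) (by norm_num))]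
    rw [hlint]; simp
  have hf_meas : Measurable f := hfe_meas.ennreal_toReal
  have hf_int : Integrable f := by
    refine Integrable.mono' (g := (Icc a b).indicator (fun _ => (1:ℝ)))
      ((integrable_indicator_iff measurableSet_Icc).2
      ((integrableOn_const_iff).2 (Or.inr (by simp [Real.volume_Icc])))) hf_meas.aestronglyMeasurable
      (Filter.Eventually.of_forall fun x => ?_)
    by_cases hx : x ∈ Icc a b
    · rw [Real.norm_eq_abs, abs_of_nonneg (hf0 x)]
      simpa [indicator, hx] using hf1 x
    · simp [hfsupp x hx, indicator, hx]
  have hxf_int : Integrable (fun x => x * f x) := by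
    refine Integrable.mono' (g := (Icc a b).indicator (fun x => |x|))
      ((integrable_indicator_iff measurableSet_Icc).2
      (ContinuousOn.integrableOn_compact isCompact_Icc continuous_abs.continuousOn))
      (measurable_id.mul hf_meas).aestronglyMeasurable (Filter.Eventually.of_forall fun x => ?_)
    by_cases hx : x ∈ Icc a b
    · rw [Real.norm_eq_abs, abs_mul, abs_of_nonneg (hf0 x)]
      simp only [indicator, hx, if_true]
      nlinarith [hf0 x, hf1 x, abs_nonneg x]
    · simp [hfsupp x hx, indicator, hx]
  -- centroid in first coordinate
  have hid_int : IntegrableOn (fun p : ℝ × EuclideanSpace ℝ (Fin (n - 1)) => p) K :=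
    ContinuousOn.integrableOn_compact hKcomp continuousOn_id
  have hfst_int : IntegrableOn (fun p : ℝ × EuclideanSpace ℝ (Fin (n - 1)) => p.1) K :=
    ContinuousOn.integrableOn_compact hKcomp continuous_fst.continuousOn
  have h1 : ∫ p in K, p.1 = 0 := by
    have h := (ContinuousLinearMap.fst ℝ ℝ (EuclideanSpace ℝ (Fin (n - 1)))).integral_comp_comm hid_int
    simp only [ContinuousLinearMap.coe_fst'] at h
    rw [h, hH1]
    simp
  have hcent : ∫ x, x * f x = 0 := by
    have hind : Integrable (K.indicator (fun p : ℝ × EuclideanSpace ℝ (Fin (n - 1)) => p.1)) (volume.prod volume) := by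
      rw [← Measure.volume_eq_prod]
      exact (integrable_indicator_iff hKm).2 hfst_int
    have h2 : ∫ p, K.indicator (fun p : ℝ × EuclideanSpace ℝ (Fin (n - 1)) => p.1) p = ∫ p in K, p.1 :=
      integral_indicator hKm
    have h3 : ∫ p, K.indicator (fun p : ℝ × EuclideanSpace ℝ (Fin (n - 1)) => p.1) p
        = ∫ x : ℝ, ∫ y : EuclideanSpace ℝ (Fin (n - 1)), K.indicator (fun p : ℝ × EuclideanSpace ℝ (Fin (n - 1)) => p.1) (x, y) := by
      rw [Measure.volume_eq_prod]
      exact MeasureTheory.integral_prod _ hind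
    have h4 : ∀ x : ℝ, (∫ y : EuclideanSpace ℝ (Fin (n - 1)), K.indicator (fun p : ℝ × EuclideanSpace ℝ (Fin (n - 1)) => p.1) (x, y)) = x * f x := by
      intro x
      have hrw : (fun y : EuclideanSpace ℝ (Fin (n - 1)) => K.indicator (fun p : ℝ × EuclideanSpace ℝ (Fin (n - 1)) => p.1) (x, y))
          = {y : EuclideanSpace ℝ (Fin (n - 1)) | (x, y) ∈ K}.indicator (fun _ => x) := by
        funext y
        by_cases hy : (x, y) ∈ K <;> simp [indicator, hy]
      have hSm : MeasurableSet {y : EuclideanSpace ℝ (Fin (n - 1)) | (x, y) ∈ K} :=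
        hKm.preimage measurable_prodMk_left
      rw [hrw, integral_indicator hSm, setIntegral_const, smul_eq_mul, mul_comm]
      rfl
    calc ∫ x, x * f x
        = ∫ x : ℝ, ∫ y : EuclideanSpace ℝ (Fin (n - 1)),
            K.indicator (fun p : ℝ × EuclideanSpace ℝ (Fin (n - 1)) => p.1) (x, y) :=
          integral_congr_ae (Filter.Eventually.of_forall (fun x => (h4 x).symm))
      _ = ∫ p, K.indicator (fun p : ℝ × EuclideanSpace ℝ (Fin (n - 1)) => p.1) p := h3.symm
      _ = ∫ p in K, p.1 := h2
      _ = 0 := h1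
  -- bathtub bounds
  have hb2 : 1/2 ≤ b :=
    mass_right f hf_int hxf_int hf0 hf1 b
      (fun x hx => hfsupp x (fun h => absurd h.2 (not_le.2 hx))) hintf hcent
  have ha2 : 1/2 ≤ -a := by
    refine mass_right (fun x => f (-x)) hf_int.comp_neg ?_ (fun x => hf0 _) (fun x => hf1 _)
      (-a) ?_ ?_ ?_
    · have h : (fun x => x * f (-x)) = fun x => -((-x) * f (-x)) := by funext x; ring
      rw [h]
      exact (hxf_int.comp_neg).neg
    · intro x hx
      refine hfsupp _ (fun h => ?_)
      have := h.1
      linarith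
    · rw [(Measure.measurePreserving_neg (volume : Measure ℝ)).integral_comp
        (Homeomorph.neg ℝ).measurableEmbedding f]
      exact hintf
    · have hF : ∫ x, (fun y => y * f y) (-x) = 0 := by
        rw [(Measure.measurePreserving_neg (volume : Measure ℝ)).integral_comp
          (Homeomorph.neg ℝ).measurableEmbedding (fun y => y * f y)]
        exact hcent
      have : ∫ x, x * f (-x) = - ∫ x, (fun y => y * f y) (-x) := by
        rw [← integral_neg]
        congr 1
        funext x
        simp
      rw [this, hF, neg_zero]
  -- the slab bound via convexity
  obtain ⟨x₀, hx₀⟩ := hH3eq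
  have hx₀fe : fe x₀ = 1 := hx₀
  obtain ⟨y₀, hy₀⟩ : {y : EuclideanSpace ℝ (Fin (n - 1)) | (x₀, y) ∈ K}.Nonempty := by
    refine nonempty_of_measure_ne_zero (μ := volume) ?_
    rw [hx₀]
    norm_num
  have hax₀ : a ≤ x₀ := ha.2 ⟨(x₀, y₀), hy₀, rfl⟩
  have hx₀b : x₀ ≤ b := hb.2 ⟨(x₀, y₀), hy₀, rfl⟩
  have hnpos : (0:ℝ) < n := by positivity
  have hcast : ((n-1:ℕ):ℝ) + 1 = (n:ℝ) := by
    rw [Nat.cast_sub (by omega : 1 ≤ n)]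
    norm_num
  have hboundR : ∀ x ∈ Ioc x₀ b, ((b - x)/(b - x₀))^(n-1) ≤ f x := by
    intro x hx
    have hlt : x₀ < b := lt_of_lt_of_le hx.1 hx.2
    have hden : (0:ℝ) < b - x₀ := by linarith
    set t := (x - x₀)/(b - x₀) with hT
    have ht0 : 0 ≤ t := div_nonneg (by linarith [hx.1]) (le_of_lt hden)
    have ht1 : t ≤ 1 := (div_le_one hden).2 (by linarith [hx.2])
    have h1t : 1 - t = (b - x)/(b - x₀) := by
      rw [hT]
      rw [eq_div_iff hden.ne', sub_mul, div_mul_cancel₀ _ hden.ne']; ring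
    have hxeq : (1-t)*x₀ + t*b = x := by
      rw [hT]
      field_simp
      ring
    have hkey := sect_lower (n-1) K hKconv (x₀ := x₀) hyb ht0 ht1
    rw [hxeq] at hkey
    have hkey2 : ENNReal.ofReal ((1-t)^(n-1)) ≤ fe x := by
      calc ENNReal.ofReal ((1-t)^(n-1))
          = ENNReal.ofReal ((1-t)^(n-1)) * fe x₀ := by rw [hx₀fe, mul_one]
        _ ≤ fe x := hkey
    have h1t0 : (0:ℝ) ≤ (1-t)^(n-1) := pow_nonneg (by linarith) _
    have := ENNReal.toReal_mono (hfe_ne_top x) hkey2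
    rw [ENNReal.toReal_ofReal h1t0] at this
    calc ((b - x)/(b - x₀))^(n-1) = (1-t)^(n-1) := by rw [h1t]
      _ ≤ f x := this
  have hboundL : ∀ x ∈ Ico a x₀, ((x - a)/(x₀ - a))^(n-1) ≤ f x := by
    intro x hx
    have hlt : a < x₀ := lt_of_le_of_lt hx.1 hx.2
    have hden : (0:ℝ) < x₀ - a := by linarith
    set t := (x₀ - x)/(x₀ - a) with hT
    have ht0 : 0 ≤ t := div_nonneg (by linarith [hx.2]) (le_of_lt hden)
    have ht1 : t ≤ 1 := (div_le_one hden).2 (by linarith [hx.1])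
    have h1t : 1 - t = (x - a)/(x₀ - a) := by
      rw [hT]
      rw [eq_div_iff hden.ne', sub_mul, div_mul_cancel₀ _ hden.ne']; ring
    have hxeq : (1-t)*x₀ + t*a = x := by
      rw [hT]
      field_simp
      ring
    have hkey := sect_lower (n-1) K hKconv (x₀ := x₀) hya ht0 ht1
    rw [hxeq] at hkey
    have hkey2 : ENNReal.ofReal ((1-t)^(n-1)) ≤ fe x := by
      calc ENNReal.ofReal ((1-t)^(n-1))
          = ENNReal.ofReal ((1-t)^(n-1)) * fe x₀ := by rw [hx₀fe, mul_one]
        _ ≤ fe x := hkey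
    have h1t0 : (0:ℝ) ≤ (1-t)^(n-1) := pow_nonneg (by linarith) _
    have := ENNReal.toReal_mono (hfe_ne_top x) hkey2
    rw [ENNReal.toReal_ofReal h1t0] at this
    calc ((x - a)/(x₀ - a))^(n-1) = (1-t)^(n-1) := by rw [h1t]
      _ ≤ f x := this
  have hR := cone_int_right f hf_int hf0 (n-1) hx₀b hboundR
  have hL := cone_int_left f hf_int hf0 (n-1) hax₀ hboundL
  have hsum : (∫ x in Icc a x₀, f x) + ∫ x in Icc x₀ b, f x ≤ 1 := by
    rw [show (∫ x in Icc x₀ b, f x) = ∫ x in Ioc x₀ b, f x from integral_Icc_eq_integral_Ioc]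
    rw [← setIntegral_union
      ((Iic_disjoint_Ioi le_rfl).mono Icc_subset_Iic_self Ioc_subset_Ioi_self)
      measurableSet_Ioc hf_int.integrableOn hf_int.integrableOn,
      Icc_union_Ioc_eq_Icc hax₀ hx₀b]
    calc ∫ x in Icc a b, f x ≤ ∫ x, f x :=
          setIntegral_le_integral hf_int (Filter.Eventually.of_forall hf0)
      _ = 1 := hintf
  have hba : b - a ≤ (n:ℝ) := by
    have h1 : (x₀ - a)/((n-1:ℕ)+1) + (b - x₀)/((n-1:ℕ)+1) ≤ 1 := by
      calc (x₀ - a)/((n-1:ℕ)+1) + (b - x₀)/((n-1:ℕ)+1)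
          ≤ (∫ x in Icc a x₀, f x) + ∫ x in Icc x₀ b, f x := add_le_add hL hR
        _ ≤ 1 := hsum
    rw [← add_div, hcast, div_le_one hnpos] at h1
    linarith
  exact ⟨hba, by linarith, by linarith, by linarith, by linarith⟩
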